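/- Let V be an n×n symmetric positive semidefinite matrix with v_{ii} = ∑_{j≠i} v_{ij}, v_{ij} ≥ m > 0 for i ≠ j, and n ≥ 2. Then for any x ∈ ℝ^n, xᵀVx ≥ m ∑_{i<j} (x_i + x_j)² ; in particular if n ≥ 3, xᵀVx = 0 implies x = 0, so V is positive definite and invertible. -/

import Mathlib

open Finset

lemma swap_sum {n : ℕ} (g : Fin n → Fin n → ℝ) :
    ∑ i, ∑ j ∈ univ.filter (fun j => j < i), g i j
      = ∑ i, ∑ j ∈ univ.filter (fun j => i < j), g j i := by
  simp only [sum_filter]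
  rw [Finset.sum_comm]

lemma quad_eq {n : ℕ} (V : Matrix (Fin n) (Fin n) ℝ) (hsym : V.IsSymm)
    (hdiag : ∀ i, V i i = ∑ j ∈ Finset.univ.erase i, V i j) (x : Fin n → ℝ) :
    dotProduct x (V.mulVec x)
      = ∑ i, ∑ j ∈ univ.filter (fun j => i < j), V i j * (x i + x j) ^ 2 := by
  have h1 : dotProduct x (V.mulVec x)
      = ∑ i, ∑ j ∈ univ.erase i, V i j * (x i ^ 2 + x i * x j) := by
    unfold dotProduct Matrix.mulVec
    refine Finset.sum_congr rfl fun i _ => ?_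
    rw [dotProduct, Finset.mul_sum, ← Finset.add_sum_erase _ _ (Finset.mem_univ i),
      hdiag i, Finset.sum_mul, Finset.mul_sum, ← Finset.sum_add_distrib]
    refine Finset.sum_congr rfl fun j _ => ?_
    ring
  rw [h1]
  have h2 : ∀ i, ∑ j ∈ univ.erase i, V i j * (x i ^ 2 + x i * x j)
      = ∑ j ∈ univ.filter (fun j => j < i), V i j * (x i ^ 2 + x i * x j)
        + ∑ j ∈ univ.filter (fun j => i < j), V i j * (x i ^ 2 + x i * x j) := by
    intro i
    have hu : univ.erase i = univ.filter (fun j => j < i) ∪ univ.filter (fun j => i < j) := by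
      ext j
      simp only [Finset.mem_erase, Finset.mem_union, Finset.mem_filter, Finset.mem_univ,
        true_and, and_true]
      exact ⟨fun h => h.lt_or_gt, fun h => h.elim ne_of_lt ne_of_gt⟩
    rw [hu, Finset.sum_union]
    rw [Finset.disjoint_left]
    intro a ha hb
    simp only [Finset.mem_filter] at ha hb
    exact absurd (ha.2.trans hb.2) (lt_irrefl a)
  simp only [h2, Finset.sum_add_distrib]
  rw [swap_sum (fun i j => V i j * (x i ^ 2 + x i * x j)), ← Finset.sum_add_distrib]
  refine Finset.sum_congr rfl fun i _ => ?_
  rw [← Finset.sum_add_distrib]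
  refine Finset.sum_congr rfl fun j _ => ?_
  rw [show V j i = V i j from (Matrix.IsSymm.apply hsym i j).symm ▸ rfl]
  ring

theorem matrix_class_pos_def (n : ℕ) (hn : 2 ≤ n) (m : ℝ) (hm : 0 < m)
    (V : Matrix (Fin n) (Fin n) ℝ) (hsym : V.IsSymm) (hpsd : V.PosSemidef)
    (hdiag : ∀ i, V i i = ∑ j ∈ Finset.univ.erase i, V i j)
    (hbound : ∀ i j, i ≠ j → m ≤ V i j) :
    (∀ x : Fin n → ℝ,
      m * ∑ i, ∑ j ∈ Finset.univ.filter (fun j => i < j), (x i + x j) ^ 2 ≤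
        dotProduct x (V.mulVec x)) ∧
    (3 ≤ n → (∀ x : Fin n → ℝ, dotProduct x (V.mulVec x) = 0 → x = 0) ∧
      V.PosDef ∧ IsUnit V) := by
  have key := quad_eq V hsym hdiag
  constructor
  · intro x
    rw [key x, Finset.mul_sum]
    refine Finset.sum_le_sum fun i _ => ?_
    rw [Finset.mul_sum]
    refine Finset.sum_le_sum fun j hj => ?_
    have hij : i ≠ j := ne_of_lt (Finset.mem_filter.mp hj).2
    exact mul_le_mul_of_nonneg_right (hbound i j hij) (sq_nonneg _)
  · intro h3
    have hzero : ∀ x : Fin n → ℝ, dotProduct x (V.mulVec x) = 0 → x = 0 := by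
      intro x hx
      rw [key x] at hx
      have hnn : ∀ i j, i ≠ j → 0 ≤ V i j * (x i + x j) ^ 2 := fun i j hij =>
        mul_nonneg (le_trans hm.le (hbound i j hij)) (sq_nonneg _)
      have hterm : ∀ i j, i < j → V i j * (x i + x j) ^ 2 = 0 := by
        intro i j hij
        have h1 := (Finset.sum_eq_zero_iff_of_nonneg (fun i _ =>
          Finset.sum_nonneg fun j hj =>
            hnn i j (ne_of_lt (Finset.mem_filter.mp hj).2))).mp hx i (Finset.mem_univ i)
        exact (Finset.sum_eq_zero_iff_of_nonneg (fun j hj =>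
          hnn i j (ne_of_lt (Finset.mem_filter.mp hj).2))).mp h1 j
          (Finset.mem_filter.mpr ⟨Finset.mem_univ j, hij⟩)
      have hpair : ∀ i j, i ≠ j → x i + x j = 0 := by
        intro i j hij
        rcases hij.lt_or_gt with h | h
        · have h0 := hterm i j h
          have hV : 0 < V i j := lt_of_lt_of_le hm (hbound i j hij)
          have := (mul_eq_zero.mp h0).resolve_left hV.ne'
          have := pow_eq_zero_iff (n := 2) (by norm_num) |>.mp this
          linarith
        · have h0 := hterm j i h
          have hV : 0 < V j i := lt_of_lt_of_le hm (hbound j i hij.symm)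
          have := (mul_eq_zero.mp h0).resolve_left hV.ne'
          have := pow_eq_zero_iff (n := 2) (by norm_num) |>.mp this
          linarith
      funext i
      have hc : 1 < (Finset.univ.erase i).card := by
        rw [Finset.card_erase_of_mem (Finset.mem_univ i), Finset.card_univ, Fintype.card_fin]
        omega
      obtain ⟨j, hj, k, hk, hjk⟩ := Finset.one_lt_card.mp hc
      have hji : j ≠ i := (Finset.mem_erase.mp hj).1
      have hki : k ≠ i := (Finset.mem_erase.mp hk).1
      have e1 := hpair i j hji.symm
      have e2 := hpair i k hki.symm
      have e3 := hpair j k hjk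
      show x i = 0
      linarith
    have hpd : V.PosDef := by
      refine Matrix.PosDef.of_dotProduct_mulVec_pos hpsd.1 (fun x hx => ?_)
      have hle := hpsd.dotProduct_mulVec_nonneg x
      have hne : dotProduct (star x) (V.mulVec x) ≠ 0 := by
        simp only [star_trivial]
        intro h
        exact hx (hzero x h)
      simp only [star_trivial] at hle hne ⊢
      exact lt_of_le_of_ne hle (Ne.symm hne)
    exact ⟨hzero, hpd, (Matrix.isUnit_iff_isUnit_det V).mpr
      (isUnit_iff_ne_zero.mpr hpd.det_pos.ne')⟩
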